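/- Let G(x) be a q×q symmetric matrix with entries in ℝ[x_1,...,x_n], and let H(G) ⊆ ℝ[x_1,...,x_n] be the set of all polynomials of the form λ_0 + Σ_{k=1}^m ⟨Λ_k, G(x)^{⊗k}⟩ where m ∈ ℕ, λ_0 ≥ 0 is a real number, and each Λ_k is a q^k × q^k positive semidefinite real matrix. Then H(G) is closed under addition and multiplication: if f, g ∈ H(G) then f + g ∈ H(G) and f·g ∈ H(G). -/

import Mathlib

open scoped BigOperators

noncomputable section

/-- The `k`-fold Kronecker power of a matrix, with rows and columns indexed by
functions `Fin k → ι` (a type of cardinality `(#ι)^k`):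
`(M^{⊗k})_{a,b} = ∏ᵢ M_{a i, b i}`. -/
def kronPow {ι : Type*} {R : Type*} [CommMonoid R] (M : Matrix ι ι R) (k : ℕ) :
    Matrix (Fin k → ι) (Fin k → ι) R :=
  Matrix.of fun a b => ∏ i, M (a i) (b i)

/-- Trace inner product `⟨Λ, B⟩ = tr(Λᵀ B) = ∑ᵢⱼ Λᵢⱼ Bᵢⱼ` of a real matrix against a
polynomial matrix. -/
def tipP {n : ℕ} {ι : Type*} [Fintype ι] (Λ : Matrix ι ι ℝ)
    (B : Matrix ι ι (MvPolynomial (Fin n) ℝ)) : MvPolynomial (Fin n) ℝ :=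
  ∑ i, ∑ j, MvPolynomial.C (Λ i j) * B i j

/-- The cone `H(G)` of all polynomials of the form
`λ₀ + ∑_{k=1}^m ⟨Λ_k, G(x)^{⊗k}⟩` with `λ₀ ≥ 0` and each `Λ_k` positive semidefinite. -/
def Hset {n : ℕ} {ι : Type*} [Fintype ι]
    (G : Matrix ι ι (MvPolynomial (Fin n) ℝ)) : Set (MvPolynomial (Fin n) ℝ) :=
  { p | ∃ (m : ℕ) (lam0 : ℝ) (Λ : (k : ℕ) → Matrix (Fin k → ι) (Fin k → ι) ℝ),
      0 ≤ lam0 ∧ (∀ k ∈ Finset.Icc 1 m, (Λ k).PosSemidef) ∧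
      p = MvPolynomial.C lam0 + ∑ k ∈ Finset.Icc 1 m, tipP (Λ k) (kronPow G k) }

section aux

set_option linter.unusedSectionVars false

variable {n : ℕ} {ι : Type*} [Fintype ι]

lemma tipP_add (Λ M : Matrix ι ι ℝ) (B : Matrix ι ι (MvPolynomial (Fin n) ℝ)) :
    tipP (Λ + M) B = tipP Λ B + tipP M B := by
  simp [tipP, add_mul, Finset.sum_add_distrib]

lemma tipP_zero (B : Matrix ι ι (MvPolynomial (Fin n) ℝ)) : tipP (0 : Matrix ι ι ℝ) B = 0 := by
  simp [tipP]

lemma tipP_smul (c : ℝ) (Λ : Matrix ι ι ℝ) (B : Matrix ι ι (MvPolynomial (Fin n) ℝ)) :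
    tipP (c • Λ) B = MvPolynomial.C c * tipP Λ B := by
  simp [tipP, Finset.mul_sum, mul_assoc, map_mul]

lemma psd_add {Λ M : Matrix ι ι ℝ} (hΛ : Λ.PosSemidef) (hM : M.PosSemidef) :
    (Λ + M).PosSemidef := by
  refine ⟨hΛ.1.add hM.1, fun x => ?_⟩
  have := add_nonneg (hΛ.2 x) (hM.2 x)
  simpa [Matrix.add_mulVec, dotProduct_add, mul_add, add_mul, Finsupp.sum_add] using this

lemma psd_smul {Λ : Matrix ι ι ℝ} {c : ℝ} (hc : 0 ≤ c) (hΛ : Λ.PosSemidef) :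
    (c • Λ).PosSemidef := by
  refine ⟨?_, fun x => ?_⟩
  · unfold Matrix.IsHermitian
    rw [Matrix.conjTranspose_smul, hΛ.1.eq]
    simp
  · have := mul_nonneg hc (hΛ.2 x)
    simpa [Matrix.smul_mulVec, dotProduct_smul, smul_eq_mul, Finsupp.mul_sum, mul_assoc, mul_left_comm] using this

def padAt (k : ℕ) (Λ : Matrix (Fin k → ι) (Fin k → ι) ℝ) :
    (j : ℕ) → Matrix (Fin j → ι) (Fin j → ι) ℝ :=
  fun j => if h : j = k then h ▸ Λ else 0

lemma padAt_self (k : ℕ) (Λ : Matrix (Fin k → ι) (Fin k → ι) ℝ) : padAt k Λ k = Λ := by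
  simp [padAt]

lemma padAt_ne {k j : ℕ} (h : j ≠ k) (Λ : Matrix (Fin k → ι) (Fin k → ι) ℝ) :
    padAt k Λ j = 0 := by simp [padAt, h]

lemma padAt_psd {k : ℕ} {Λ : Matrix (Fin k → ι) (Fin k → ι) ℝ} (hΛ : Λ.PosSemidef) (j : ℕ) :
    (padAt k Λ j).PosSemidef := by
  by_cases h : j = k
  · subst h; rw [padAt_self]; exact hΛ
  · rw [padAt_ne h]; exact Matrix.PosSemidef.zero

lemma Hset_const {G : Matrix ι ι (MvPolynomial (Fin n) ℝ)} {c : ℝ} (hc : 0 ≤ c) :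
    MvPolynomial.C c ∈ Hset G :=
  ⟨0, c, fun _ => 0, hc, fun _ _ => Matrix.PosSemidef.zero, by simp⟩

lemma psd_apply_self_nonneg {Λ : Matrix ι ι ℝ} (hΛ : Λ.PosSemidef) [DecidableEq ι] (i : ι) :
    0 ≤ Λ i i := by
  have := hΛ.2 (Finsupp.single i 1)
  simpa [dotProduct, Matrix.mulVec, Pi.single_apply] using this

lemma Hset_single {G : Matrix ι ι (MvPolynomial (Fin n) ℝ)} (k : ℕ)
    {Λ : Matrix (Fin k → ι) (Fin k → ι) ℝ} (hΛ : Λ.PosSemidef) :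
    tipP Λ (kronPow G k) ∈ Hset G := by
  classical
  rcases Nat.eq_zero_or_pos k with hk | hk
  · subst hk
    have : tipP Λ (kronPow G 0) = MvPolynomial.C (Λ default default) := by
      simp [tipP, kronPow]
    rw [this]
    exact Hset_const (psd_apply_self_nonneg hΛ _)
  · refine ⟨k, 0, padAt k Λ, le_refl 0, fun j _ => padAt_psd hΛ j, ?_⟩
    rw [Finset.sum_eq_single k]
    · rw [padAt_self]; simp
    · intro j _ hj; rw [padAt_ne hj, tipP_zero]
    · intro h; exact absurd (Finset.mem_Icc.mpr ⟨hk, le_refl k⟩) h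

lemma sum_extend {G : Matrix ι ι (MvPolynomial (Fin n) ℝ)} {m m' : ℕ} (h : m ≤ m')
    (Λ : (k : ℕ) → Matrix (Fin k → ι) (Fin k → ι) ℝ) :
    ∑ k ∈ Finset.Icc 1 m, tipP (Λ k) (kronPow G k)
      = ∑ k ∈ Finset.Icc 1 m', tipP (if k ≤ m then Λ k else 0) (kronPow G k) := by
  calc ∑ k ∈ Finset.Icc 1 m, tipP (Λ k) (kronPow G k)
      = ∑ k ∈ Finset.Icc 1 m, tipP (if k ≤ m then Λ k else 0) (kronPow G k) :=
        Finset.sum_congr rfl fun k hk => by rw [if_pos (Finset.mem_Icc.mp hk).2]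
    _ = ∑ k ∈ Finset.Icc 1 m', tipP (if k ≤ m then Λ k else 0) (kronPow G k) := by
        refine Finset.sum_subset (Finset.Icc_subset_Icc_right h) fun k hk hk' => ?_
        have : ¬ k ≤ m := fun hle =>
          hk' (Finset.mem_Icc.mpr ⟨(Finset.mem_Icc.mp hk).1, hle⟩)
        rw [if_neg this, tipP_zero]

lemma Hset_add' {G : Matrix ι ι (MvPolynomial (Fin n) ℝ)} {p r : MvPolynomial (Fin n) ℝ}
    (hp : p ∈ Hset G) (hr : r ∈ Hset G) : p + r ∈ Hset G := by
  obtain ⟨m1, a, Λ, ha, hΛ, rfl⟩ := hp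
  obtain ⟨m2, b, M, hb, hM, rfl⟩ := hr
  refine ⟨max m1 m2, a + b,
    fun k => (if k ≤ m1 then Λ k else 0) + (if k ≤ m2 then M k else 0),
    add_nonneg ha hb, fun k hk => ?_, ?_⟩
  · apply psd_add
    · split_ifs with h
      · exact hΛ k (Finset.mem_Icc.mpr ⟨(Finset.mem_Icc.mp hk).1, h⟩)
      · exact Matrix.PosSemidef.zero
    · split_ifs with h
      · exact hM k (Finset.mem_Icc.mpr ⟨(Finset.mem_Icc.mp hk).1, h⟩)
      · exact Matrix.PosSemidef.zero
  · rw [sum_extend (le_max_left m1 m2) Λ, sum_extend (le_max_right m1 m2) M]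
    simp only [tipP_add, Finset.sum_add_distrib, map_add]
    ring

lemma Hset_zero {G : Matrix ι ι (MvPolynomial (Fin n) ℝ)} :
    (0 : MvPolynomial (Fin n) ℝ) ∈ Hset G := by
  have := Hset_const (G := G) (le_refl (0 : ℝ))
  simpa using this

lemma Hset_sum {G : Matrix ι ι (MvPolynomial (Fin n) ℝ)} {α : Type*} (s : Finset α)
    (h : α → MvPolynomial (Fin n) ℝ) (hh : ∀ i ∈ s, h i ∈ Hset G) :
    (∑ i ∈ s, h i) ∈ Hset G := by
  classical
  induction s using Finset.induction_on with
  | empty => simpa using Hset_zero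
  | insert _ _ hx ih =>
    rw [Finset.sum_insert hx]
    exact Hset_add' (hh _ (Finset.mem_insert_self _ _))
      (ih fun i hi => hh i (Finset.mem_insert_of_mem hi))

def prodMat {k l : ℕ} (Λ : Matrix (Fin k → ι) (Fin k → ι) ℝ)
    (M : Matrix (Fin l → ι) (Fin l → ι) ℝ) :
    Matrix (Fin (k + l) → ι) (Fin (k + l) → ι) ℝ :=
  Matrix.of fun a b =>
    Λ (fun i => a (Fin.castAdd l i)) (fun i => b (Fin.castAdd l i)) *
    M (fun i => a (Fin.natAdd k i)) (fun i => b (Fin.natAdd k i))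

lemma prodMat_psd {k l : ℕ} {Λ : Matrix (Fin k → ι) (Fin k → ι) ℝ}
    {M : Matrix (Fin l → ι) (Fin l → ι) ℝ} (hΛ : Λ.PosSemidef) (hM : M.PosSemidef) :
    (prodMat Λ M).PosSemidef := by
  obtain ⟨B₁, hB₁⟩ : ∃ B : Matrix _ _ ℝ, Λ = B.conjTranspose * B := by
    classical
    open MatrixOrder in exact CStarAlgebra.nonneg_iff_eq_star_mul_self.mp hΛ.nonneg
  obtain ⟨B₂, hB₂⟩ : ∃ B : Matrix _ _ ℝ, M = B.conjTranspose * B := by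
    classical
    open MatrixOrder in exact CStarAlgebra.nonneg_iff_eq_star_mul_self.mp hM.nonneg
  set C : Matrix ((Fin k → ι) × (Fin l → ι)) (Fin (k + l) → ι) ℝ :=
    Matrix.of fun c a =>
      B₁ c.1 (fun i => a (Fin.castAdd l i)) * B₂ c.2 (fun i => a (Fin.natAdd k i)) with hC
  have : prodMat Λ M = C.conjTranspose * C := by
    ext a b
    simp only [Matrix.mul_apply, Matrix.conjTranspose_apply, hC, Matrix.of_apply, star_trivial]
    rw [Fintype.sum_prod_type]
    simp only [prodMat, Matrix.of_apply, hB₁, hB₂, Matrix.mul_apply,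
      Matrix.conjTranspose_apply, star_trivial, Finset.sum_mul_sum]
    refine Finset.sum_congr rfl fun c₁ _ => Finset.sum_congr rfl fun c₂ _ => by ring
  rw [this]
  exact Matrix.posSemidef_conjTranspose_mul_self C

lemma tipP_mul {G : Matrix ι ι (MvPolynomial (Fin n) ℝ)} (k l : ℕ)
    (Λ : Matrix (Fin k → ι) (Fin k → ι) ℝ) (M : Matrix (Fin l → ι) (Fin l → ι) ℝ) :
    tipP Λ (kronPow G k) * tipP M (kronPow G l)
      = tipP (prodMat Λ M) (kronPow G (k + l)) := by
  symm
  unfold tipP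
  set e := Fin.appendEquiv (α := ι) k l with he
  rw [← Equiv.sum_comp e
    (fun a => ∑ b, MvPolynomial.C (prodMat Λ M a b) * kronPow G (k + l) a b)]
  have inner : ∀ a, (∑ b, MvPolynomial.C (prodMat Λ M a b) * kronPow G (k + l) a b)
      = ∑ p : (Fin k → ι) × (Fin l → ι),
          MvPolynomial.C (prodMat Λ M a (e p)) * kronPow G (k + l) a (e p) := fun a =>
    (Equiv.sum_comp e (fun b => MvPolynomial.C (prodMat Λ M a b) * kronPow G (k + l) a b)).symm
  simp only [inner]
  rw [Finset.sum_mul_sum]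
  simp only [Fintype.sum_prod_type, Finset.sum_mul_sum]
  refine Finset.sum_congr rfl fun a₁ _ => Finset.sum_congr rfl fun a₂ _ => ?_
  refine (Finset.sum_congr rfl fun b₁ _ => Finset.sum_congr rfl fun b₂ _ => ?_)
  have hsplit : ∀ (a₁ : Fin k → ι) (a₂ : Fin l → ι),
      (fun i => e (a₁, a₂) (Fin.castAdd l i)) = a₁ ∧
      (fun i => e (a₁, a₂) (Fin.natAdd k i)) = a₂ := fun a₁ a₂ =>
    ⟨funext fun i => Fin.append_left a₁ a₂ i, funext fun i => Fin.append_right a₁ a₂ i⟩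
  simp only [prodMat, kronPow, Matrix.of_apply, (hsplit a₁ a₂).1, (hsplit a₁ a₂).2,
    (hsplit b₁ b₂).1, (hsplit b₁ b₂).2]
  rw [Fin.prod_univ_add]
  have h1 : ∀ i : Fin k, G (e (a₁, a₂) (Fin.castAdd l i)) (e (b₁, b₂) (Fin.castAdd l i))
      = G (a₁ i) (b₁ i) := fun i => by
    rw [he]; simp [Fin.appendEquiv, Fin.append_left]
  have h2 : ∀ i : Fin l, G (e (a₁, a₂) (Fin.natAdd k i)) (e (b₁, b₂) (Fin.natAdd k i))
      = G (a₂ i) (b₂ i) := fun i => by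
    rw [he]; simp [Fin.appendEquiv, Fin.append_right]
  rw [Finset.prod_congr rfl fun i _ => h1 i, Finset.prod_congr rfl fun i _ => h2 i, map_mul]
  ring

end aux

/-- The cone `H(G)` is closed under addition and multiplication. -/
theorem Hset_add_mul_closed {n q : ℕ}
    (G : Matrix (Fin q) (Fin q) (MvPolynomial (Fin n) ℝ)) (hG : G.IsSymm)
    (f g : MvPolynomial (Fin n) ℝ) (hf : f ∈ Hset G) (hg : g ∈ Hset G) :
    f + g ∈ Hset G ∧ f * g ∈ Hset G := by
  refine ⟨Hset_add' hf hg, ?_⟩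
  obtain ⟨m1, a, Λ, ha, hΛ, rfl⟩ := hf
  obtain ⟨m2, b, M, hb, hM, rfl⟩ := hg
  have hfg : (MvPolynomial.C a + ∑ k ∈ Finset.Icc 1 m1, tipP (Λ k) (kronPow G k)) *
      (MvPolynomial.C b + ∑ l ∈ Finset.Icc 1 m2, tipP (M l) (kronPow G l))
      = MvPolynomial.C (a * b)
        + (∑ l ∈ Finset.Icc 1 m2, tipP (a • M l) (kronPow G l))
        + (∑ k ∈ Finset.Icc 1 m1, tipP (b • Λ k) (kronPow G k))
        + ∑ k ∈ Finset.Icc 1 m1, ∑ l ∈ Finset.Icc 1 m2,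
            tipP (prodMat (Λ k) (M l)) (kronPow G (k + l)) := by
    have e1 : MvPolynomial.C a * ∑ l ∈ Finset.Icc 1 m2, tipP (M l) (kronPow G l)
        = ∑ l ∈ Finset.Icc 1 m2, tipP (a • M l) (kronPow G l) := by
      rw [Finset.mul_sum]
      exact Finset.sum_congr rfl fun l _ => (tipP_smul a (M l) _).symm
    have e2 : (∑ k ∈ Finset.Icc 1 m1, tipP (Λ k) (kronPow G k)) * MvPolynomial.C b
        = ∑ k ∈ Finset.Icc 1 m1, tipP (b • Λ k) (kronPow G k) := by
      rw [Finset.sum_mul]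
      exact Finset.sum_congr rfl fun k _ => by rw [tipP_smul]; ring
    have e3 : (∑ k ∈ Finset.Icc 1 m1, tipP (Λ k) (kronPow G k)) *
        ∑ l ∈ Finset.Icc 1 m2, tipP (M l) (kronPow G l)
        = ∑ k ∈ Finset.Icc 1 m1, ∑ l ∈ Finset.Icc 1 m2,
            tipP (prodMat (Λ k) (M l)) (kronPow G (k + l)) := by
      rw [Finset.sum_mul_sum]
      exact Finset.sum_congr rfl fun k _ => Finset.sum_congr rfl fun l _ => tipP_mul k l _ _
    calc (MvPolynomial.C a + ∑ k ∈ Finset.Icc 1 m1, tipP (Λ k) (kronPow G k)) *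
        (MvPolynomial.C b + ∑ l ∈ Finset.Icc 1 m2, tipP (M l) (kronPow G l))
        = MvPolynomial.C a * MvPolynomial.C b
          + MvPolynomial.C a * (∑ l ∈ Finset.Icc 1 m2, tipP (M l) (kronPow G l))
          + (∑ k ∈ Finset.Icc 1 m1, tipP (Λ k) (kronPow G k)) * MvPolynomial.C b
          + (∑ k ∈ Finset.Icc 1 m1, tipP (Λ k) (kronPow G k)) *
              ∑ l ∈ Finset.Icc 1 m2, tipP (M l) (kronPow G l) := by ring
      _ = _ := by rw [e1, e2, e3, map_mul]
  rw [hfg]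
  refine Hset_add' (Hset_add' (Hset_add' (Hset_const (mul_nonneg ha hb)) ?_) ?_) ?_
  · exact Hset_sum _ _ fun l hl => Hset_single l (psd_smul ha (hM l hl))
  · exact Hset_sum _ _ fun k hk => Hset_single k (psd_smul hb (hΛ k hk))
  · exact Hset_sum _ _ fun k hk =>
      Hset_sum _ _ fun l hl => Hset_single (k + l) (prodMat_psd (hΛ k hk) (hM l hl))

end
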